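/- Let H be a complex Hilbert space and let P, Q, A be bounded operators on H with P and Q self-adjoint. Then the following are equivalent: (1) for all x, y ∈ H, 0 ≤ re⟪x, P x⟫ + re⟪y, Q y⟫ + 2·re⟪x, A y⟫ (i.e. the block operator matrix [[P, A], [A*, Q]] on H ⊕ H is positive); (2) P and Q are positive operators and for all x, y ∈ H one has |⟪x, A y⟫|² ≤ re⟪x, P x⟫ · re⟪y, Q y⟫. -/

import Mathlib

open scoped InnerProductSpace in
/-- For self-adjoint bounded operators `P, Q` and a bounded operator `A` on a complex
Hilbert space `H`, the block matrix `[[P, A], [A*, Q]]` is positive (expressed as the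
quadratic form condition on `H ⊕ H`) iff `P` and `Q` are positive and
`|⟪x, A y⟫|² ≤ re⟪x, P x⟫ · re⟪y, Q y⟫` for all `x, y`. -/
theorem stmt_9 {H : Type*} [NormedAddCommGroup H] [InnerProductSpace ℂ H] [CompleteSpace H]
    (P Q A : H →L[ℂ] H) (hP : IsSelfAdjoint P) (hQ : IsSelfAdjoint Q) :
    (∀ x y : H, 0 ≤ (⟪x, P x⟫_ℂ).re + (⟪y, Q y⟫_ℂ).re + 2 * (⟪x, A y⟫_ℂ).re) ↔
      (P.IsPositive ∧ Q.IsPositive ∧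
        ∀ x y : H, ‖⟪x, A y⟫_ℂ‖ ^ 2 ≤ (⟪x, P x⟫_ℂ).re * (⟪y, Q y⟫_ℂ).re) := by
  constructor
  · intro h
    have hp : ∀ x : H, 0 ≤ (⟪x, P x⟫_ℂ).re := fun x => by simpa using h x 0
    have hq : ∀ y : H, 0 ≤ (⟪y, Q y⟫_ℂ).re := fun y => by simpa using h 0 y
    refine ⟨⟨hP.isSymmetric, fun x => ?_⟩, ⟨hQ.isSymmetric, fun y => ?_⟩, ?_⟩
    · simpa [ContinuousLinearMap.reApplyInnerSelf, inner_re_symm] using hp x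
    · simpa [ContinuousLinearMap.reApplyInnerSelf, inner_re_symm] using hq y
    · intro x y
      set c : ℂ := ⟪x, A y⟫_ℂ with hc
      by_cases hc0 : c = 0
      · rw [hc0]
        simpa using mul_nonneg (hp x) (hq y)
      · set z : ℂ := -c / ‖c‖ with hz
        have hcn : (0:ℝ) < ‖c‖ := norm_pos_iff.mpr hc0
        have hzc : (starRingEnd ℂ) z * c = -‖c‖ := by
          rw [hz, map_div₀, map_neg, Complex.conj_ofReal, div_mul_eq_mul_div, neg_mul,
            Complex.conj_mul']
          norm_cast
          have hne2 : ‖c‖ ≠ 0 := hcn.ne'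
          field_simp
        have hzz : (starRingEnd ℂ) z * z = 1 := by
          rw [hz, map_div₀, map_neg, Complex.conj_ofReal, div_mul_div_comm, neg_mul_neg,
            Complex.conj_mul']
          norm_cast
          rw [sq, div_self (mul_ne_zero hcn.ne' hcn.ne')]
        have key : ∀ t : ℝ, 0 ≤ t ^ 2 * (⟪x, P x⟫_ℂ).re + (⟪y, Q y⟫_ℂ).re
            - 2 * t * ‖c‖ := by
          intro t
          have h0 := h (((t : ℂ) * z) • x) y
          rw [inner_smul_left, map_smul, inner_smul_right, inner_smul_left, ← hc] at h0
          have h1 : (starRingEnd ℂ) ((t:ℂ) * z) * ((t:ℂ) * z * ⟪x, P x⟫_ℂ) =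
              ((t:ℝ)^2 : ℝ) * ⟪x, P x⟫_ℂ := by
            rw [map_mul, Complex.conj_ofReal]
            have : (t:ℂ) * (starRingEnd ℂ) z * ((t:ℂ) * z * ⟪x, P x⟫_ℂ) =
                (t:ℂ) * (t:ℂ) * ((starRingEnd ℂ) z * z) * ⟪x, P x⟫_ℂ := by ring
            rw [this, hzz]
            push_cast
            ring
          have h2 : (starRingEnd ℂ) ((t:ℂ) * z) * c = ((-(t * ‖c‖) : ℝ) : ℂ) := by
            rw [map_mul, Complex.conj_ofReal, mul_assoc, hzc]
            push_cast
            ring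
          rw [h1, h2] at h0
          simp only [Complex.add_re, Complex.re_ofReal_mul, Complex.ofReal_re] at h0
          linarith
        rcases eq_or_lt_of_le (hp x) with hpx | hpx
        · exfalso
          have h3 := key (((⟪y, Q y⟫_ℂ).re + 1) / (2 * ‖c‖))
          rw [← hpx] at h3
          have heq : 2 * (((⟪y, Q y⟫_ℂ).re + 1) / (2 * ‖c‖)) * ‖c‖
              = (⟪y, Q y⟫_ℂ).re + 1 := by
            have hne2 : ‖c‖ ≠ 0 := hcn.ne'
            field_simp
          rw [heq] at h3
          linarith
        · have h3 := key (‖c‖ / (⟪x, P x⟫_ℂ).re)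
          have heq : (‖c‖ / (⟪x, P x⟫_ℂ).re) ^ 2 * (⟪x, P x⟫_ℂ).re + (⟪y, Q y⟫_ℂ).re
              - 2 * (‖c‖ / (⟪x, P x⟫_ℂ).re) * ‖c‖
              = (⟪y, Q y⟫_ℂ).re - ‖c‖ ^ 2 / (⟪x, P x⟫_ℂ).re := by
            have := hpx.ne'
            field_simp
            ring
          rw [heq, sub_nonneg, div_le_iff₀ hpx] at h3
          linarith
  · rintro ⟨hPpos, hQpos, hineq⟩ x y
    have hp : 0 ≤ (⟪x, P x⟫_ℂ).re := by
      simpa [ContinuousLinearMap.reApplyInnerSelf, inner_re_symm] using hPpos.2 x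
    have hq : 0 ≤ (⟪y, Q y⟫_ℂ).re := by
      simpa [ContinuousLinearMap.reApplyInnerSelf, inner_re_symm] using hQpos.2 y
    have h1 := hineq x y
    have h2 : -(‖⟪x, A y⟫_ℂ‖) ≤ (⟪x, A y⟫_ℂ).re := by
      have := abs_le.mp (Complex.abs_re_le_norm ⟪x, A y⟫_ℂ)
      simpa using this.1
    nlinarith [sq_nonneg ((⟪x, P x⟫_ℂ).re - (⟪y, Q y⟫_ℂ).re), norm_nonneg (⟪x, A y⟫_ℂ),
      sq_nonneg ((⟪x, P x⟫_ℂ).re + (⟪y, Q y⟫_ℂ).re + 2 * (⟪x, A y⟫_ℂ).re)]
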